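/- Let X be a two-distance set on the unit sphere S^{d-1} with inner product set A_inn(X) = {α, β} (α, β ∈ [-1,1)). If α + β ≥ 0, then |X| ≤ binom(d+1, 2). -/

import Mathlib

open scoped RealInnerProductSpace

lemma tri_sum {n : ℕ} (g : Fin n → Fin n → ℝ) (hg : ∀ i j, g i j = g j i) :
    ∑ p ∈ Finset.univ.filter (fun p : Fin n × Fin n => p.1 ≤ p.2),
      (if p.1 = p.2 then g p.1 p.2 else 2 * g p.1 p.2) = ∑ i, ∑ j, g i j := by
  classical
  have hsplit : ∀ p : Fin n × Fin n,
      (if p.1 = p.2 then g p.1 p.2 else 2 * g p.1 p.2)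
        = g p.1 p.2 + (if ¬ p.1 = p.2 then g p.1 p.2 else 0) := by
    intro p
    by_cases h : p.1 = p.2
    · simp [h]
    · simp [h]; ring
  simp_rw [hsplit, Finset.sum_add_distrib]
  rw [← Finset.sum_filter, Finset.filter_filter]
  have hflt : Finset.univ.filter (fun p : Fin n × Fin n => p.1 ≤ p.2 ∧ ¬ p.1 = p.2)
      = Finset.univ.filter (fun p : Fin n × Fin n => p.1 < p.2) := by
    apply Finset.filter_congr
    intro p _
    simp [lt_iff_le_and_ne]
  rw [hflt]
  have hswap : ∑ p ∈ Finset.univ.filter (fun p : Fin n × Fin n => p.1 < p.2), g p.1 p.2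
      = ∑ p ∈ Finset.univ.filter (fun p : Fin n × Fin n => ¬ p.1 ≤ p.2), g p.1 p.2 := by
    apply Finset.sum_nbij' (fun p => Prod.swap p) (fun p => Prod.swap p)
    · intro p hp
      simp only [Finset.mem_filter, Finset.mem_univ, true_and] at hp ⊢
      simp [Prod.swap, not_le, hp]
    · intro p hp
      simp only [Finset.mem_filter, Finset.mem_univ, true_and, not_le] at hp ⊢
      simp [Prod.swap, hp]
    · intro p _; simp
    · intro p _; simp
    · intro p _; exact hg p.1 p.2
  rw [hswap, Finset.sum_filter_add_sum_filter_not]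
  exact Fintype.sum_prod_type' fun i j => g i j

lemma inner_lt_one_aux {d : ℕ} (x y : EuclideanSpace ℝ (Fin d)) (hx : ‖x‖ = 1) (hy : ‖y‖ = 1)
    (h : x ≠ y) : ⟪x, y⟫ < 1 := by
  have h1 : ‖x - y‖ ^ 2 = ‖x‖ ^ 2 - 2 * ⟪x, y⟫ + ‖y‖ ^ 2 := by rw [@norm_sub_sq_real]
  have h2 : 0 < ‖x - y‖ ^ 2 :=
    pow_pos (norm_pos_iff.mpr (sub_ne_zero.mpr h)) 2
  rw [hx, hy] at h1
  nlinarith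

lemma card_le_of_posdef_factor {ι T : Type*} [Fintype ι] [DecidableEq ι] [Fintype T]
    (Φ : Matrix ι T ℝ) (Ψ : Matrix T ι ℝ) (h : (Φ * Ψ).PosDef) :
    Fintype.card ι ≤ Fintype.card T := by
  have h1 := Matrix.rank_of_isUnit (Φ * Ψ) h.isUnit
  have h2 := le_trans (Matrix.rank_mul_le_left Φ Ψ) (Matrix.rank_le_card_width Φ)
  omega

theorem stmt12 (d : ℕ) (hd : 2 ≤ d) (X : Finset (EuclideanSpace ℝ (Fin d)))
    (hsph : ∀ x ∈ X, ‖x‖ = 1) (α β : ℝ) (hαβ : α ≠ β)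
    (hinn : {r : ℝ | ∃ x ∈ X, ∃ y ∈ X, x ≠ y ∧ ⟪x, y⟫ = r} = {α, β})
    (hpos : 0 ≤ α + β) :
    X.card ≤ (d + 1).choose 2 := by
  classical
  have hα1 : α < 1 := by
    have h : α ∈ ({α, β} : Set ℝ) := by simp
    rw [← hinn] at h
    obtain ⟨x, hx, y, hy, hne, hxy⟩ := h
    rw [← hxy]
    exact inner_lt_one_aux x y (hsph x hx) (hsph y hy) hne
  have hβ1 : β < 1 := by
    have h : β ∈ ({α, β} : Set ℝ) := by simp
    rw [← hinn] at h
    obtain ⟨x, hx, y, hy, hne, hxy⟩ := h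
    rw [← hxy]
    exact inner_lt_one_aux x y (hsph x hx) (hsph y hy) hne
  have hip : ∀ x y : EuclideanSpace ℝ (Fin d), ⟪x, y⟫ = ∑ i, x i * y i := by
    intro x y; simp [PiLp.inner_apply, mul_comm]
  have hnorm1 : ∀ x ∈ X, ∑ i, x i * x i = 1 := by
    intro x hx
    have h := hip x x
    rw [real_inner_self_eq_norm_sq, hsph x hx] at h
    simpa using h.symm
  set Φ : Matrix {x // x ∈ X} {p : Fin d × Fin d // p.1 ≤ p.2} ℝ :=
    fun x t => x.1 t.1.1 * x.1 t.1.2 with hΦ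
  set Ψ : Matrix {p : Fin d × Fin d // p.1 ≤ p.2} {x // x ∈ X} ℝ := fun t y =>
    if t.1.1 = t.1.2 then y.1 t.1.1 * y.1 t.1.2 + α * β else 2 * (y.1 t.1.1 * y.1 t.1.2) with hΨ
  have key : ∀ x y : {x // x ∈ X}, (Φ * Ψ) x y = ⟪x.1, y.1⟫ ^ 2 + α * β := by
    intro x y
    rw [Matrix.mul_apply]
    set g : Fin d → Fin d → ℝ := fun i j =>
      (x.1 i * y.1 i) * (x.1 j * y.1 j) + (if i = j then α * β * (x.1 i * x.1 i) else 0) with hg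
    have hgs : ∀ i j, g i j = g j i := by
      intro i j
      by_cases h : i = j
      · rw [h]
      · simp only [hg, if_neg h, if_neg (Ne.symm h)]; ring
    have hsub : ∑ t : {p : Fin d × Fin d // p.1 ≤ p.2}, Φ x t * Ψ t y
        = ∑ p ∈ Finset.univ.filter (fun p : Fin d × Fin d => p.1 ≤ p.2),
            (if p.1 = p.2 then g p.1 p.2 else 2 * g p.1 p.2) := by
      rw [Finset.sum_subtype (p := fun p : Fin d × Fin d => p.1 ≤ p.2)
        (Finset.univ.filter (fun p : Fin d × Fin d => p.1 ≤ p.2))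
        (by simp) (fun p : Fin d × Fin d => if p.1 = p.2 then g p.1 p.2 else 2 * g p.1 p.2)]
      apply Finset.sum_congr rfl
      rintro ⟨⟨i, j⟩, hij⟩ -
      by_cases h : i = j
      · subst h
        simp [hΦ, hΨ, hg]
        ring
      · simp [hΦ, hΨ, hg, h]
        ring
    rw [hsub, tri_sum g hgs]
    have hgg : ∑ i, ∑ j, g i j
        = (∑ i, x.1 i * y.1 i) * (∑ j, x.1 j * y.1 j) + α * β * ∑ i, x.1 i * x.1 i := by
      simp only [hg, Finset.sum_add_distrib, Finset.sum_ite_eq, Finset.mem_univ, if_true]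
      rw [Finset.sum_mul_sum, Finset.mul_sum]
    rw [hgg, hnorm1 x.1 x.2, hip]
    ring
  set C : Matrix (Fin d) {x // x ∈ X} ℝ := fun i z => Real.sqrt (α + β) * z.1 i with hC
  have hdecomp : Φ * Ψ
      = ((1 - α) * (1 - β)) • (1 : Matrix {x // x ∈ X} {x // x ∈ X} ℝ)
        + C.conjTranspose * C := by
    ext x y
    rw [key x y]
    have hCC : (C.conjTranspose * C) x y = (α + β) * ∑ i, x.1 i * y.1 i := by
      rw [Matrix.mul_apply, Finset.mul_sum]
      apply Finset.sum_congr rfl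
      intro i _
      simp only [hC, Matrix.conjTranspose_apply, star_trivial]
      show √(α + β) * (↑x : EuclideanSpace ℝ (Fin d)) i * (√(α + β) * (↑y : EuclideanSpace ℝ (Fin d)) i) = _
      rw [mul_mul_mul_comm, Real.mul_self_sqrt hpos]
    by_cases h : x = y
    · subst h
      simp only [Matrix.add_apply, Matrix.smul_apply, Matrix.one_apply_eq, smul_eq_mul, hCC,
        hnorm1 x.1 x.2]
      rw [real_inner_self_eq_norm_sq, hsph x.1 x.2]
      ring
    · have hne : x.1 ≠ y.1 := fun hc => h (Subtype.ext hc)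
      have hmem : ⟪x.1, y.1⟫ ∈ ({α, β} : Set ℝ) := by
        rw [← hinn]; exact ⟨x.1, x.2, y.1, y.2, hne, rfl⟩
      simp only [Matrix.add_apply, Matrix.smul_apply, Matrix.one_apply_ne h, smul_eq_mul,
        mul_zero, zero_add, hCC, ← hip]
      rcases hmem with h' | h' <;> rw [h'] <;> ring
  have hposdef : (Φ * Ψ).PosDef := by
    rw [hdecomp]
    apply Matrix.PosDef.add_posSemidef
    · rw [Matrix.smul_one_eq_diagonal]
      exact Matrix.PosDef.diagonal fun _ => by nlinarith
    · exact Matrix.posSemidef_conjTranspose_mul_self C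
  have hmain := card_le_of_posdef_factor Φ Ψ hposdef
  have hcardT : Fintype.card {p : Fin d × Fin d // p.1 ≤ p.2} = (d + 1).choose 2 := by
    rw [← Fintype.card_congr (Sym2.sortEquiv (α := Fin d)), Sym2.card, Fintype.card_fin]
  have hcardι : Fintype.card {x // x ∈ X} = X.card := Fintype.card_coe X
  omega
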